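/- Let h : ℝ^n → (-∞, ∞] have compact domain X, let Y^g ⊂ ℝ^n be a finite grid, let y ∈ co(Y^g) be written as a convex combination y = Σ_k α_k y^{(k)} with y^{(k)} ∈ Y^g, α_k ≥ 0, Σ α_k = 1. Then the corresponding convex combination of conjugate values satisfies 0 ≤ Σ_k α_k h*(y^{(k)}) - h*(y) ≤ diam(X) · max_k ‖y^{(k)} - y‖. -/

import Mathlib

open scoped BigOperators

/-- The conjugate of `h` (with domain `X ⊆ ℝ^n`) at `v`. -/
noncomputable def conjE {n : ℕ} (h : EuclideanSpace ℝ (Fin n) → ℝ)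
    (X : Set (EuclideanSpace ℝ (Fin n))) (v : EuclideanSpace ℝ (Fin n)) : ℝ :=
  sSup ((fun x => (inner ℝ v x : ℝ) - h x) '' X)

/-- For `y = Σ_k α_k y^{(k)}` a convex combination of grid points of
`Yg`, the interpolation error of the conjugate satisfies
`0 ≤ Σ_k α_k h*(y^{(k)}) - h*(y) ≤ diam(X) · max_k ‖y^{(k)} - y‖`. -/
theorem conj_convex_combination_error {n : ℕ} {ι : Type*} [Fintype ι] [Nonempty ι]
    (h : EuclideanSpace ℝ (Fin n) → ℝ)
    (X : Set (EuclideanSpace ℝ (Fin n))) (hXc : IsCompact X) (hXne : X.Nonempty)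
    (Yg : Set (EuclideanSpace ℝ (Fin n))) (hYgfin : Yg.Finite)
    (α : ι → ℝ) (yk : ι → EuclideanSpace ℝ (Fin n))
    (hyk : ∀ k, yk k ∈ Yg) (hα : ∀ k, 0 ≤ α k) (hαsum : ∑ k, α k = 1)
    (y : EuclideanSpace ℝ (Fin n)) (hrep : ∑ k, α k • yk k = y) :
    0 ≤ (∑ k, α k * conjE h X (yk k)) - conjE h X y ∧
    (∑ k, α k * conjE h X (yk k)) - conjE h X y
      ≤ Metric.diam X * (⨆ k, ‖yk k - y‖) := by
  classical
  set M := ⨆ k, ‖yk k - y‖ with hM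
  have hMbdd : BddAbove (Set.range fun k => ‖yk k - y‖) :=
    (Set.finite_range _).bddAbove
  have hMle : ∀ k, ‖yk k - y‖ ≤ M := fun k => le_ciSup hMbdd k
  have hM0 : 0 ≤ M := le_trans (norm_nonneg _) (hMle (Classical.arbitrary ι))
  have hD0 : 0 ≤ Metric.diam X := Metric.diam_nonneg
  obtain ⟨C, hC⟩ := isBounded_iff_forall_norm_le.mp hXc.isBounded
  have htrans : ∀ v w : EuclideanSpace ℝ (Fin n),
      BddAbove ((fun x => (inner ℝ v x : ℝ) - h x) '' X) →
      BddAbove ((fun x => (inner ℝ w x : ℝ) - h x) '' X) := by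
    rintro v w ⟨c, hc⟩
    refine ⟨c + ‖w - v‖ * C, ?_⟩
    rintro z ⟨x, hx, rfl⟩
    have h1 : (inner ℝ v x : ℝ) - h x ≤ c := hc (Set.mem_image_of_mem _ hx)
    have h2 : (inner ℝ (w - v) x : ℝ) ≤ ‖w - v‖ * ‖x‖ := real_inner_le_norm _ _
    have h3 : ‖w - v‖ * ‖x‖ ≤ ‖w - v‖ * C :=
      mul_le_mul_of_nonneg_left (hC x hx) (norm_nonneg _)
    have h4 : (inner ℝ w x : ℝ) = (inner ℝ v x : ℝ) + inner ℝ (w - v) x := by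
      rw [inner_sub_left]; ring
    simp only
    linarith
  by_cases hB : BddAbove ((fun x => (inner ℝ y x : ℝ) - h x) '' X)
  · obtain ⟨x₀, hx₀⟩ := hXne
    have hne : ∀ v : EuclideanSpace ℝ (Fin n),
        ((fun x => (inner ℝ v x : ℝ) - h x) '' X).Nonempty :=
      fun v => ⟨_, Set.mem_image_of_mem _ hx₀⟩
    have hBk : ∀ v, BddAbove ((fun x => (inner ℝ v x : ℝ) - h x) '' X) :=
      fun v => htrans y v hB
    -- lower bound
    have hlow : conjE h X y ≤ ∑ k, α k * conjE h X (yk k) := by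
      apply csSup_le (hne y)
      rintro z ⟨x, hx, rfl⟩
      have hz : (inner ℝ y x : ℝ) - h x = ∑ k, α k * ((inner ℝ (yk k) x : ℝ) - h x) := by
        have : (inner ℝ y x : ℝ) = ∑ k, α k * (inner ℝ (yk k) x : ℝ) := by
          rw [← hrep, sum_inner]
          exact Finset.sum_congr rfl fun k _ => real_inner_smul_left _ _ _
        rw [this, Finset.sum_congr rfl (fun k _ => mul_sub (α k) _ _),
          Finset.sum_sub_distrib, ← Finset.sum_mul, hαsum, one_mul]
      show (inner ℝ y x : ℝ) - h x ≤ ∑ k, α k * conjE h X (yk k)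
      rw [hz]
      refine Finset.sum_le_sum fun k _ => mul_le_mul_of_nonneg_left ?_ (hα k)
      exact le_csSup (hBk (yk k)) (Set.mem_image_of_mem _ hx)
    have key : ∀ ε > (0:ℝ),
        (∑ k, α k * conjE h X (yk k)) ≤ conjE h X y + Metric.diam X * M + ε := by
      intro ε hε
      have hex : ∀ k, ∃ x ∈ X, conjE h X (yk k) - ε < (inner ℝ (yk k) x : ℝ) - h x := by
        intro k
        obtain ⟨z, hz, hz2⟩ := exists_lt_of_lt_csSup (hne (yk k))
          (show conjE h X (yk k) - ε < conjE h X (yk k) by linarith)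
        obtain ⟨x, hx, rfl⟩ := hz
        exact ⟨x, hx, hz2⟩
      choose xk hxkX hxk using hex
      have step1 : (∑ k, α k * conjE h X (yk k)) ≤
          ∑ k, α k * ((inner ℝ (yk k) (xk k) : ℝ) - h (xk k) + ε) := by
        refine Finset.sum_le_sum fun k _ => mul_le_mul_of_nonneg_left ?_ (hα k)
        have := hxk k; linarith
      have split : ∀ k, (inner ℝ (yk k) (xk k) : ℝ) - h (xk k) + ε =
          ((inner ℝ y (xk k) : ℝ) - h (xk k)) + (inner ℝ (yk k - y) (xk k - x₀) : ℝ)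
            + (inner ℝ (yk k - y) x₀ : ℝ) + ε := by
        intro k
        simp only [inner_sub_left, inner_sub_right]
        ring
      have hA : ∀ k, (inner ℝ y (xk k) : ℝ) - h (xk k) ≤ conjE h X y :=
        fun k => le_csSup hB (Set.mem_image_of_mem _ (hxkX k))
      have hBd : ∀ k, (inner ℝ (yk k - y) (xk k - x₀) : ℝ) ≤ M * Metric.diam X := by
        intro k
        calc (inner ℝ (yk k - y) (xk k - x₀) : ℝ) ≤ ‖yk k - y‖ * ‖xk k - x₀‖ :=
              real_inner_le_norm _ _
          _ ≤ M * Metric.diam X := by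
              apply mul_le_mul (hMle k) ?_ (norm_nonneg _) hM0
              rw [← dist_eq_norm]
              exact Metric.dist_le_diam_of_mem hXc.isBounded (hxkX k) hx₀
      have hCzero : (∑ k, α k * (inner ℝ (yk k - y) x₀ : ℝ)) = 0 := by
        have : (∑ k, α k • (yk k - y)) = (0 : EuclideanSpace ℝ (Fin n)) := by
          simp only [smul_sub]
          rw [Finset.sum_sub_distrib, hrep, ← Finset.sum_smul, hαsum, one_smul, sub_self]
        calc (∑ k, α k * (inner ℝ (yk k - y) x₀ : ℝ))
            = (inner ℝ (∑ k, α k • (yk k - y)) x₀ : ℝ) := by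
              rw [sum_inner]
              exact (Finset.sum_congr rfl fun k _ => real_inner_smul_left _ _ _).symm
          _ = 0 := by rw [this, inner_zero_left]
      calc (∑ k, α k * conjE h X (yk k))
          ≤ ∑ k, α k * ((inner ℝ (yk k) (xk k) : ℝ) - h (xk k) + ε) := step1
        _ = (∑ k, α k * ((inner ℝ y (xk k) : ℝ) - h (xk k)))
            + (∑ k, α k * (inner ℝ (yk k - y) (xk k - x₀) : ℝ))
            + (∑ k, α k * (inner ℝ (yk k - y) x₀ : ℝ))
            + (∑ k, α k * ε) := by
            rw [← Finset.sum_add_distrib, ← Finset.sum_add_distrib,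
              ← Finset.sum_add_distrib]
            exact Finset.sum_congr rfl fun k _ => by rw [split k]; ring
        _ ≤ (∑ k, α k * conjE h X y) + (∑ k, α k * (M * Metric.diam X)) + 0 + ε := by
            rw [hCzero, ← Finset.sum_mul, hαsum, one_mul]
            gcongr with k _ k _
            · exact hα k
            · exact hA k
            · exact hα k
            · exact hBd k
        _ = conjE h X y + Metric.diam X * M + ε := by
            rw [← Finset.sum_mul, ← Finset.sum_mul, hαsum, one_mul, one_mul]
            ring
    have hup : (∑ k, α k * conjE h X (yk k)) ≤ conjE h X y + Metric.diam X * M :=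
      le_of_forall_pos_le_add (by intro ε hε; simpa [add_assoc] using key ε hε)
    constructor
    · linarith
    · linarith
  · have hall : ∀ v, conjE h X v = 0 := by
      intro v
      apply Real.sSup_of_not_bddAbove
      exact fun hv => hB (htrans v y hv)
    simp only [hall, mul_zero, Finset.sum_const_zero, sub_zero, zero_sub, neg_zero]
    exact ⟨le_refl _, mul_nonneg hD0 hM0⟩
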